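/- Let f : ℂ → ℂ be entire, let R > 0, and set C_R = 1 − e^{−π R²}. Then for every z ∈ ℂ, |f(z)|² e^{−π|z|²} · C_R ≤ ∫_{D(z,R)} |f(w)|² e^{−π|w|²} dA(w), where D(z, R) is the open disc of radius R centered at z. -/

import Mathlib

open MeasureTheory Real Set

lemma circle_mean_eq (H : ℂ → ℂ) (hH : Differentiable ℂ H) {r : ℝ} (hr : 0 < r) :
    ∫ θ in (0:ℝ)..(2*Real.pi), H (circleMap 0 r θ) = (2 * Real.pi : ℝ) • H 0 := by
  have h1 : (∮ ζ in C(0, r), (ζ - 0)⁻¹ • H ζ) = (2 * Real.pi * Complex.I : ℂ) • H 0 :=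
    (hH.differentiableOn.diffContOnCl).circleIntegral_sub_inv_smul
      (by simpa using hr)
  rw [circleIntegral] at h1
  simp only [deriv_circleMap, smul_eq_mul, sub_zero] at h1
  have h2 : ∀ θ : ℝ, circleMap 0 r θ * Complex.I * ((circleMap 0 r θ)⁻¹ * H (circleMap 0 r θ))
      = Complex.I * H (circleMap 0 r θ) := by
    intro θ
    have hne : circleMap 0 r θ ≠ 0 := circleMap_ne_center hr.ne'
    field_simp
  rw [intervalIntegral.integral_congr (fun θ _ => h2 θ),
    intervalIntegral.integral_const_mul] at h1
  have h3 : Complex.I * ∫ θ in (0:ℝ)..(2*Real.pi), H (circleMap 0 r θ)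
      = Complex.I * ((2 * Real.pi : ℝ) • H 0) := by
    rw [h1]; push_cast [Complex.real_smul]; ring
  exact mul_left_cancel₀ Complex.I_ne_zero h3

lemma circle_mean_le (H : ℂ → ℂ) (hH : Differentiable ℂ H) {r : ℝ} (hr : 0 < r) :
    2 * Real.pi * ‖H 0‖ ≤ ∫ θ in (0:ℝ)..(2*Real.pi), ‖H (circleMap 0 r θ)‖ := by
  have h := circle_mean_eq H hH hr
  calc 2 * Real.pi * ‖H 0‖ = ‖(2 * Real.pi : ℝ) • H 0‖ := by
        rw [norm_smul, Real.norm_of_nonneg (by positivity)]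
    _ = ‖∫ θ in (0:ℝ)..(2*Real.pi), H (circleMap 0 r θ)‖ := by rw [h]
    _ ≤ ∫ θ in (0:ℝ)..(2*Real.pi), ‖H (circleMap 0 r θ)‖ :=
        intervalIntegral.norm_integral_le_integral_norm (by positivity)

lemma key_gaussian (H : ℂ → ℂ) (hH : Differentiable ℂ H) {R : ℝ} (hR : 0 < R) :
    ‖H 0‖ * (1 - Real.exp (-Real.pi * R ^ 2))
      ≤ ∫ u in Metric.ball (0:ℂ) R, ‖H u‖ * Real.exp (-Real.pi * ‖u‖ ^ 2) := by
  set φ : ℂ → ℝ := fun u => ‖H u‖ * Real.exp (-Real.pi * ‖u‖ ^ 2) with hφ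
  have hφc : Continuous φ := by
    apply hH.continuous.norm.mul
    exact Real.continuous_exp.comp (by fun_prop)
  set ψ : ℂ → ℝ := (Metric.ball (0:ℂ) R).indicator φ with hψ
  have hb : ∫ u in Metric.ball (0:ℂ) R, φ u = ∫ u, ψ u :=
    (integral_indicator measurableSet_ball).symm
  have hpolar := Complex.integral_comp_polarCoord_symm ψ
  set F : ℝ × ℝ → ℝ := fun p => p.1 * Real.exp (-Real.pi * p.1 ^ 2)
      * ‖H (Complex.polarCoord.symm p)‖ with hF
  set S : Set (ℝ × ℝ) := Ioo 0 R ×ˢ Ioo (-Real.pi) Real.pi with hS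
  have hST : S ⊆ polarCoord.target := by
    rw [polarCoord_target]
    exact prod_mono Ioo_subset_Ioi_self subset_rfl
  -- the polar integral equals the integral of F over S
  have heq : ∀ p ∈ polarCoord.target,
      p.1 • ψ (Complex.polarCoord.symm p) = S.indicator F p := by
    intro p hp
    rw [polarCoord_target] at hp
    obtain ⟨hp1, hp2⟩ := hp
    have habs : ‖Complex.polarCoord.symm p‖ = p.1 := by
      rw [Complex.norm_polarCoord_symm, abs_of_pos hp1]
    by_cases h : p.1 < R
    · have hmem : Complex.polarCoord.symm p ∈ Metric.ball (0:ℂ) R := by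
        rw [mem_ball_zero_iff, habs]; exact h
      have hpS : p ∈ S := ⟨⟨hp1, h⟩, hp2⟩
      rw [hψ, Set.indicator_of_mem hmem, Set.indicator_of_mem hpS, hF, hφ]
      simp only [smul_eq_mul, habs]
      ring
    · have hmem : Complex.polarCoord.symm p ∉ Metric.ball (0:ℂ) R := by
        rw [mem_ball_zero_iff, habs]; exact h
      have hpS : p ∉ S := fun hps => h hps.1.2
      rw [hψ, Set.indicator_of_notMem hmem, Set.indicator_of_notMem hpS, smul_zero]
  have hSmeas : MeasurableSet S := measurableSet_Ioo.prod measurableSet_Ioo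
  have hsplit : ∫ p in polarCoord.target, p.1 • ψ (Complex.polarCoord.symm p)
      = ∫ p in S, F p := by
    rw [setIntegral_congr_fun (polarCoord.open_target.measurableSet) heq,
      setIntegral_indicator hSmeas, inter_eq_right.mpr hST]
  -- continuity and integrability of F on S
  have hFc : Continuous F := by
    have hsymm : Continuous fun p : ℝ × ℝ => Complex.polarCoord.symm p := by
      simp only [Complex.polarCoord_symm_apply]
      fun_prop
    have hHc := hH.continuous
    fun_prop
  have hFint : IntegrableOn F S := by
    apply (hFc.continuousOn.integrableOn_compact (isCompact_Icc.prod isCompact_Icc)).mono_set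
      (prod_mono Ioo_subset_Icc_self Ioo_subset_Icc_self)
  -- Fubini
  have hfub : ∫ p in S, F p
      = ∫ r in Ioo (0:ℝ) R, ∫ θ in Ioo (-Real.pi) Real.pi, F (r, θ) := by
    rw [hS, Measure.volume_eq_prod ℝ ℝ] at hFint ⊢
    exact setIntegral_prod F hFint
  -- inner integral identity
  have hinner : ∀ r : ℝ, ∫ θ in Ioo (-Real.pi) Real.pi, F (r, θ)
      = r * Real.exp (-Real.pi * r ^ 2) * ∫ θ in (0:ℝ)..(2*Real.pi), ‖H (circleMap 0 r θ)‖ := by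
    intro r
    have hcir : ∀ θ : ℝ, Complex.polarCoord.symm (r, θ) = circleMap 0 r θ := by
      intro θ
      rw [Complex.polarCoord_symm_apply, circleMap]
      push_cast [Complex.exp_mul_I, Complex.ofReal_cos, Complex.ofReal_sin]
      ring
    have hper : Function.Periodic (fun θ : ℝ => ‖H (circleMap 0 r θ)‖) (2 * Real.pi) :=
      (periodic_circleMap 0 r).comp fun ζ => ‖H ζ‖
    have h1 : ∫ θ in Ioo (-Real.pi) Real.pi, F (r, θ)
        = r * Real.exp (-Real.pi * r ^ 2)
          * ∫ θ in Ioo (-Real.pi) Real.pi, ‖H (circleMap 0 r θ)‖ := by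
      simp only [hF, hcir]
      rw [integral_const_mul]
    rw [h1]
    congr 1
    rw [← integral_Ioc_eq_integral_Ioo,
      ← intervalIntegral.integral_of_le (by linarith [Real.pi_pos])]
    have h2 := hper.intervalIntegral_add_eq (-Real.pi) 0
    rw [show -Real.pi + 2*Real.pi = Real.pi by ring, zero_add] at h2
    exact h2
  -- integrability of the marginal
  have hFint' : Integrable F ((volume.restrict (Ioo (0:ℝ) R)).prod
      (volume.restrict (Ioo (-Real.pi) Real.pi))) := by
    rw [Measure.prod_restrict]
    exact hFint
  have hmarg : IntegrableOn (fun r => ∫ θ in Ioo (-Real.pi) Real.pi, F (r, θ)) (Ioo (0:ℝ) R) :=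
    hFint'.integral_prod_left
  -- FTC computation
  have hderiv : ∀ r ∈ Set.uIcc (0:ℝ) R,
      HasDerivAt (fun s => -Real.exp (-Real.pi * s^2))
        (2*Real.pi*r*Real.exp (-Real.pi*r^2)) r := by
    intro r _
    have h1 : HasDerivAt (fun s : ℝ => -Real.pi * s^2) (-Real.pi * (2*r)) r := by
      simpa using ((hasDerivAt_pow 2 r).const_mul (-Real.pi))
    have h2 := h1.exp.neg
    refine h2.congr_deriv ?_
    ring
  have hcont : IntervalIntegrable (fun r => 2*Real.pi*r*Real.exp (-Real.pi*r^2))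
      volume 0 R := (by fun_prop : Continuous fun r : ℝ =>
        2*Real.pi*r*Real.exp (-Real.pi*r^2)).intervalIntegrable _ _
  have hFTC := intervalIntegral.integral_eq_sub_of_hasDerivAt hderiv hcont
  -- lower bound integrand
  have hlc : Continuous fun r : ℝ => ‖H 0‖ * (2*Real.pi*r*Real.exp (-Real.pi*r^2)) := by
    fun_prop
  have hl : IntegrableOn (fun r : ℝ => ‖H 0‖ * (2*Real.pi*r*Real.exp (-Real.pi*r^2)))
      (Ioo (0:ℝ) R) :=
    (hlc.continuousOn.integrableOn_compact isCompact_Icc).mono_set Ioo_subset_Icc_self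
  have hpt : ∀ r ∈ Ioo (0:ℝ) R,
      ‖H 0‖ * (2*Real.pi*r*Real.exp (-Real.pi*r^2))
        ≤ ∫ θ in Ioo (-Real.pi) Real.pi, F (r, θ) := by
    intro r hr
    rw [hinner r]
    have h1 := circle_mean_le H hH hr.1
    have h2 : (0:ℝ) ≤ r * Real.exp (-Real.pi * r^2) :=
      mul_nonneg hr.1.le (Real.exp_pos _).le
    calc ‖H 0‖ * (2*Real.pi*r*Real.exp (-Real.pi*r^2))
        = (r * Real.exp (-Real.pi * r^2)) * (2 * Real.pi * ‖H 0‖) := by ring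
      _ ≤ (r * Real.exp (-Real.pi * r^2))
          * ∫ θ in (0:ℝ)..(2*Real.pi), ‖H (circleMap 0 r θ)‖ :=
            mul_le_mul_of_nonneg_left h1 h2
      _ = r * Real.exp (-Real.pi * r^2)
          * ∫ θ in (0:ℝ)..(2*Real.pi), ‖H (circleMap 0 r θ)‖ := by ring
  calc ‖H 0‖ * (1 - Real.exp (-Real.pi * R ^ 2))
      = ∫ r in Ioo (0:ℝ) R, ‖H 0‖ * (2*Real.pi*r*Real.exp (-Real.pi*r^2)) := by
        rw [MeasureTheory.integral_const_mul, ← integral_Ioc_eq_integral_Ioo,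
          ← intervalIntegral.integral_of_le hR.le, hFTC]
        norm_num
        left
        ring
    _ ≤ ∫ r in Ioo (0:ℝ) R, ∫ θ in Ioo (-Real.pi) Real.pi, F (r, θ) :=
        setIntegral_mono_on hl hmarg measurableSet_Ioo hpt
    _ = ∫ p in S, F p := hfub.symm
    _ = ∫ u in Metric.ball (0:ℂ) R, φ u := by rw [← hsplit, hpolar, ← hb]

/-- For entire `f`, `R > 0` and `C_R = 1 − e^{−πR²}`, for every `z ∈ ℂ`,
`|f(z)|² e^{−π|z|²} C_R ≤ ∫_{D(z,R)} |f(w)|² e^{−π|w|²} dA(w)`. -/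
theorem sq_abs_mul_gaussian_mul_le_integral_ball
    (f : ℂ → ℂ) (hf : Differentiable ℂ f) (R : ℝ) (hR : 0 < R) (z : ℂ) :
    ‖f z‖ ^ 2 * Real.exp (-Real.pi * ‖z‖ ^ 2) * (1 - Real.exp (-Real.pi * R ^ 2))
      ≤ ∫ w in Metric.ball z R, ‖f w‖ ^ 2 * Real.exp (-Real.pi * ‖w‖ ^ 2) := by
  set c : ℂ := ((-(2 * Real.pi) : ℝ) : ℂ) * (starRingEnd ℂ) z with hc
  set H : ℂ → ℂ := fun u => f (z + u) ^ 2 * Complex.exp (c * u) with hHdef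
  have hH : Differentiable ℂ H := by
    apply Differentiable.mul
    · exact (hf.comp (differentiable_id.const_add z)).pow 2
    · exact Complex.differentiable_exp.comp ((differentiable_const c).mul differentiable_id)
  have hH0 : ‖H 0‖ = ‖f z‖ ^ 2 := by simp [hHdef]
  -- translation
  have h1 : ∫ w in Metric.ball z R, ‖f w‖ ^ 2 * Real.exp (-Real.pi * ‖w‖ ^ 2)
      = ∫ u in Metric.ball (0:ℂ) R, ‖f (z + u)‖ ^ 2 * Real.exp (-Real.pi * ‖z + u‖ ^ 2) := by
    have hmp : MeasurePreserving (fun u : ℂ => z + u) volume volume :=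
      measurePreserving_add_left volume z
    have hemb : MeasurableEmbedding (fun u : ℂ => z + u) :=
      (Homeomorph.addLeft z).measurableEmbedding
    have hpre : (fun u : ℂ => z + u) ⁻¹' (Metric.ball z R) = Metric.ball 0 R := by
      ext u
      simp [Metric.mem_ball, dist_eq_norm]
    rw [← hpre]
    exact (hmp.setIntegral_preimage_emb hemb
      (fun w => ‖f w‖ ^ 2 * Real.exp (-Real.pi * ‖w‖ ^ 2)) (Metric.ball z R)).symm
  -- pointwise identity
  have h2 : ∀ u : ℂ, ‖f (z + u)‖ ^ 2 * Real.exp (-Real.pi * ‖z + u‖ ^ 2)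
      = Real.exp (-Real.pi * ‖z‖ ^ 2) * (‖H u‖ * Real.exp (-Real.pi * ‖u‖ ^ 2)) := by
    intro u
    have hnorm : ‖H u‖ = ‖f (z + u)‖ ^ 2
        * Real.exp (-(2 * Real.pi) * ((starRingEnd ℂ) z * u).re) := by
      rw [hHdef]
      simp only [norm_mul, norm_pow, Complex.norm_exp]
      congr 2
      rw [hc, mul_assoc, Complex.re_ofReal_mul]
    have hsq : ‖z + u‖ ^ 2 = ‖z‖ ^ 2 + ‖u‖ ^ 2 + 2 * ((starRingEnd ℂ) z * u).re := by
      have h3 : (starRingEnd ℂ) z * u = (starRingEnd ℂ) (z * (starRingEnd ℂ) u) := by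
        rw [map_mul, Complex.conj_conj]
      simp only [Complex.sq_norm, h3, Complex.conj_re]
      exact Complex.normSq_add z u
    rw [hnorm, hsq, show -Real.pi * (‖z‖^2 + ‖u‖^2 + 2*((starRingEnd ℂ) z * u).re)
      = (-Real.pi*‖z‖^2) + ((-(2*Real.pi) * ((starRingEnd ℂ) z * u).re)
        + (-Real.pi*‖u‖^2)) by ring, Real.exp_add, Real.exp_add]
    ring
  calc ‖f z‖ ^ 2 * Real.exp (-Real.pi * ‖z‖ ^ 2) * (1 - Real.exp (-Real.pi * R ^ 2))
      = Real.exp (-Real.pi * ‖z‖ ^ 2) * (‖H 0‖ * (1 - Real.exp (-Real.pi * R ^ 2))) := by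
        rw [hH0]; ring
    _ ≤ Real.exp (-Real.pi * ‖z‖ ^ 2)
        * ∫ u in Metric.ball (0:ℂ) R, ‖H u‖ * Real.exp (-Real.pi * ‖u‖ ^ 2) :=
        mul_le_mul_of_nonneg_left (key_gaussian H hH hR) (Real.exp_pos _).le
    _ = ∫ u in Metric.ball (0:ℂ) R,
        Real.exp (-Real.pi * ‖z‖ ^ 2) * (‖H u‖ * Real.exp (-Real.pi * ‖u‖ ^ 2)) := by
        rw [MeasureTheory.integral_const_mul]
    _ = ∫ w in Metric.ball z R, ‖f w‖ ^ 2 * Real.exp (-Real.pi * ‖w‖ ^ 2) := by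
        rw [h1]
        exact setIntegral_congr_fun measurableSet_ball fun u _ => (h2 u).symm
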